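/- If G is a finitely presented group containing a finitely generated submonoid with undecidable membership problem, then the free product G ∗ ℤ admits a finite group generating set A such that membership in the submonoid of G ∗ ℤ generated by A (i.e., the positivity problem: deciding whether an element can be written as a positive word over A) is undecidable. -/

import Mathlib

open Monoid

/-- Evaluation of a word over the generators `gens` (with `true` = generator,
`false` = inverse) in the group `G`. -/
def evalWord {G : Type*} [Group G] {n : ℕ} (gens : Fin n → G)
    (w : List (Fin n × Bool)) : G :=
  (w.map (fun p => if p.2 then gens p.1 else (gens p.1)⁻¹)).prod

namespace Stmt11Aux

open Coprod

variable {G : Type*} [Group G]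

/-- The generator of the `ℤ` factor. -/
def t (G : Type*) [Group G] : Coprod G (Multiplicative ℤ) :=
  Coprod.inr (Multiplicative.ofAdd 1)

/-- The generating set: `X i * t`, then `t * S j * t⁻¹`, then `t`. -/
def gens {n k : ℕ} (X : Fin n → G) (S : Fin k → G) :
    Fin (n + k + 1) → Coprod G (Multiplicative ℤ) := fun i =>
  if h : (i : ℕ) < n then Coprod.inl (X ⟨i, h⟩) * t G
  else if h2 : (i : ℕ) < n + k then
    t G * Coprod.inl (S ⟨(i : ℕ) - n, by omega⟩) * (t G)⁻¹
  else t G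

theorem gens_left {n k : ℕ} (X : Fin n → G) (S : Fin k → G) (i : Fin n) :
    gens X S ⟨(i : ℕ), by omega⟩ = Coprod.inl (X i) * t G := by
  simp [gens, i.isLt]

theorem gens_mid {n k : ℕ} (X : Fin n → G) (S : Fin k → G) (j : Fin k) :
    gens X S ⟨n + (j : ℕ), by omega⟩ = t G * Coprod.inl (S j) * (t G)⁻¹ := by
  have h1 : ¬ (n + (j : ℕ) < n) := by omega
  have h2 : n + (j : ℕ) < n + k := by omega
  have h3 : (⟨n + (j : ℕ) - n, by omega⟩ : Fin k) = j := Fin.ext (by simp)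
  simp only [gens, dif_neg h1, dif_pos h2, h3]

theorem gens_last {n k : ℕ} (X : Fin n → G) (S : Fin k → G) :
    gens X S ⟨n + k, by omega⟩ = t G := by
  simp [gens]

/-- The retraction killing `G`. -/
def π (G : Type*) [Group G] : Coprod G (Multiplicative ℤ) →* Multiplicative ℤ :=
  Coprod.lift 1 (MonoidHom.id _)

theorem π_inl (g : G) : π G (Coprod.inl g) = 1 := by
  simp [π, Coprod.lift_apply_inl]

theorem π_t : π G (t G) = Multiplicative.ofAdd 1 := by
  simp [π, t, Coprod.lift_apply_inr]

theorem π_gens {n k : ℕ} (X : Fin n → G) (S : Fin k → G) (i : Fin (n + k + 1)) :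
    π G (gens X S i) = 1 ∨ π G (gens X S i) = Multiplicative.ofAdd 1 := by
  unfold gens
  split_ifs with h h2
  · right; simp [map_mul, π_inl, π_t]
  · left; simp [map_mul, map_inv, π_inl, π_t]
  · right; exact π_t

theorem π_gens_eq_one {n k : ℕ} (X : Fin n → G) (S : Fin k → G) (i : Fin (n + k + 1))
    (h1 : π G (gens X S i) = 1) :
    ∃ j : Fin k, gens X S i = t G * Coprod.inl (S j) * (t G)⁻¹ := by
  have hne : (Multiplicative.ofAdd (1 : ℤ)) ≠ 1 := by decide
  unfold gens at h1 ⊢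
  split_ifs at h1 ⊢ with h h2
  · exfalso
    apply hne
    rw [← h1, map_mul, π_inl, π_t, one_mul]
  · exact ⟨_, rfl⟩
  · exact absurd (π_t.symm.trans h1) hne

theorem π_prod_nonneg {n k : ℕ} (X : Fin n → G) (S : Fin k → G) (l : List (Coprod G (Multiplicative ℤ)))
    (hl : ∀ x ∈ l, x ∈ Set.range (gens X S)) :
    0 ≤ Multiplicative.toAdd (π G l.prod) := by
  induction l with
  | nil => simp
  | cons x l ih =>
    have hx : x ∈ Set.range (gens X S) := hl x (by simp)
    obtain ⟨i, rfl⟩ := hx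
    have h2 := ih (fun y hy => hl y (by simp [hy]))
    rw [List.prod_cons, map_mul, toAdd_mul]
    rcases π_gens X S i with h | h <;> rw [h] <;> simp <;> omega

theorem prod_form {n k : ℕ} (X : Fin n → G) (S : Fin k → G) (l : List (Coprod G (Multiplicative ℤ)))
    (hl : ∀ x ∈ l, x ∈ Set.range (gens X S)) (hπ : π G l.prod = 1) :
    ∃ g ∈ Submonoid.closure (Set.range S), l.prod = t G * Coprod.inl g * (t G)⁻¹ := by
  induction l with
  | nil =>
    refine ⟨1, one_mem _, ?_⟩
    simp
  | cons x l ih =>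
    obtain ⟨i, rfl⟩ := hl x (by simp)
    have hl' : ∀ y ∈ l, y ∈ Set.range (gens X S) := fun y hy => hl y (by simp [hy])
    rw [List.prod_cons, map_mul] at hπ
    have hπ' : Multiplicative.toAdd (π G (gens X S i)) +
        Multiplicative.toAdd (π G l.prod) = 0 := by
      have := congrArg Multiplicative.toAdd hπ
      simpa using this
    have h1 := π_prod_nonneg X S l hl'
    have h0 : (0:ℤ) ≤ Multiplicative.toAdd (π G (gens X S i)) := by
      rcases π_gens X S i with h | h <;> rw [h] <;> simp
    have hz : Multiplicative.toAdd (π G (gens X S i)) = 0 := by omega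
    have hz' : π G l.prod = 1 :=
      Multiplicative.toAdd.injective (by rw [toAdd_one]; omega)
    have hx1 : π G (gens X S i) = 1 :=
      Multiplicative.toAdd.injective (by rw [toAdd_one]; exact hz)
    obtain ⟨j, hj⟩ := π_gens_eq_one X S i hx1
    obtain ⟨g, hg, hgl⟩ := ih hl' hz'
    refine ⟨S j * g, mul_mem (Submonoid.subset_closure ⟨j, rfl⟩) hg, ?_⟩
    rw [List.prod_cons, hj, hgl, map_mul]
    group

theorem key {n k : ℕ} (X : Fin n → G) (S : Fin k → G) (g : G) :
    t G * Coprod.inl g * (t G)⁻¹ ∈ Submonoid.closure (Set.range (gens X S)) ↔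
      g ∈ Submonoid.closure (Set.range S) := by
  constructor
  · intro h
    obtain ⟨l, hl, hprod⟩ := Submonoid.exists_list_of_mem_closure h
    have hπ : π G l.prod = 1 := by
      rw [hprod, map_mul, map_mul, map_inv, π_inl, π_t]
      group
    obtain ⟨g', hg', hgl⟩ := prod_form X S l hl hπ
    have : Coprod.inl g = (Coprod.inl g' : Coprod G (Multiplicative ℤ)) := by
      have h2 : t G * Coprod.inl g * (t G)⁻¹ = t G * Coprod.inl g' * (t G)⁻¹ := by
        rw [← hprod, hgl]
      have h3 := mul_right_cancel h2
      exact mul_left_cancel h3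
    rw [Coprod.inl_injective this]
    exact hg'
  · intro h
    induction h using Submonoid.closure_induction with
    | mem x hx =>
      obtain ⟨j, rfl⟩ := hx
      exact Submonoid.subset_closure ⟨⟨n + (j : ℕ), by omega⟩, gens_mid X S j⟩
    | one => simpa using one_mem _
    | mul x y hx hy ihx ihy =>
      have : t G * Coprod.inl (x * y) * (t G)⁻¹ =
          (t G * Coprod.inl x * (t G)⁻¹) * (t G * Coprod.inl y * (t G)⁻¹) := by
        rw [map_mul]; group
      rw [this]
      exact mul_mem ihx ihy

theorem gens_generate {n k : ℕ} (X : Fin n → G) (S : Fin k → G)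
    (hgen : Subgroup.closure (Set.range X) = ⊤) :
    Subgroup.closure (Set.range (gens X S)) = ⊤ := by
  set K := Subgroup.closure (Set.range (gens X S)) with hK
  rw [eq_top_iff, ← Coprod.closure_range_inl_union_inr (G := G) (H := Multiplicative ℤ)]
  apply (Subgroup.closure_le K).2
  have ht : t G ∈ K := Subgroup.subset_closure ⟨_, gens_last X S⟩
  rintro x (⟨g, rfl⟩ | ⟨z, rfl⟩)
  · have hg : g ∈ Subgroup.closure (Set.range X) := hgen ▸ Subgroup.mem_top g
    induction hg using Subgroup.closure_induction with
    | mem x hx =>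
      obtain ⟨i, rfl⟩ := hx
      have : Coprod.inl (X i) = gens X S ⟨(i : ℕ), by omega⟩ * (t G)⁻¹ := by
        rw [gens_left]; group
      rw [this]
      exact mul_mem (Subgroup.subset_closure ⟨_, rfl⟩) (inv_mem ht)
    | one => rw [map_one]; exact one_mem _
    | mul x y hx hy ihx ihy => rw [map_mul]; exact mul_mem ihx ihy
    | inv x hx ihx => rw [map_inv]; exact inv_mem ihx
  · have : (Coprod.inr z : Coprod G (Multiplicative ℤ)) = (t G) ^ (Multiplicative.toAdd z) := by
      rw [t, ← map_zpow]
      congr 1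
      rw [← ofAdd_zsmul]
      simp
    rw [this]
    exact zpow_mem ht _

/-- The encoding of a word over `X` as a word over `gens X S`. -/
def code (n k : ℕ) : List (Fin n × Bool) → List (Fin (n + k + 1) × Bool) := fun w =>
  ((⟨n + k, by omega⟩ : Fin (n + k + 1)), true) ::
    (w.flatMap fun p =>
      if p.2 then [((⟨(p.1 : ℕ), by omega⟩ : Fin (n + k + 1)), true),
                   ((⟨n + k, by omega⟩ : Fin (n + k + 1)), false)]
      else [((⟨n + k, by omega⟩ : Fin (n + k + 1)), true),
            ((⟨(p.1 : ℕ), by omega⟩ : Fin (n + k + 1)), false)]) ++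
    [((⟨n + k, by omega⟩ : Fin (n + k + 1)), false)]

theorem evalWord_append {n : ℕ} (gs : Fin n → G) (w v : List (Fin n × Bool)) :
    evalWord gs (w ++ v) = evalWord gs w * evalWord gs v := by
  simp [evalWord]

theorem evalWord_code {n k : ℕ} (X : Fin n → G) (S : Fin k → G) (w : List (Fin n × Bool)) :
    evalWord (gens X S) (code n k w) = t G * Coprod.inl (evalWord X w) * (t G)⁻¹ := by
  have hmid : ∀ w : List (Fin n × Bool),
      evalWord (gens X S) (w.flatMap fun p =>
        if p.2 then [((⟨(p.1 : ℕ), by omega⟩ : Fin (n + k + 1)), true),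
                     ((⟨n + k, by omega⟩ : Fin (n + k + 1)), false)]
        else [((⟨n + k, by omega⟩ : Fin (n + k + 1)), true),
              ((⟨(p.1 : ℕ), by omega⟩ : Fin (n + k + 1)), false)]) =
        Coprod.inl (evalWord X w) := by
    intro w
    induction w with
    | nil => simp [evalWord]
    | cons p w ih =>
      obtain ⟨i, b⟩ := p
      rw [List.flatMap_cons, evalWord_append, ih]
      cases b
      · have h : evalWord X ((i, false) :: w) = (X i)⁻¹ * evalWord X w := by
          simp [evalWord]
        rw [h, map_mul, map_inv]
        congr 1
        simp only [if_neg (Bool.false_ne_true), evalWord, List.map_cons, List.map_nil,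
          List.prod_cons, List.prod_nil, if_true, mul_one, gens_left, gens_last]
        group
      · have h : evalWord X ((i, true) :: w) = X i * evalWord X w := by
          simp [evalWord]
        rw [h, map_mul]
        congr 1
        simp only [if_neg (Bool.false_ne_true), evalWord, List.map_cons, List.map_nil,
          List.prod_cons, List.prod_nil, if_true, mul_one, gens_left, gens_last]
        group
  unfold code
  rw [List.cons_append, ← List.singleton_append, evalWord_append, evalWord_append, hmid]
  simp only [evalWord, List.map_cons, List.map_nil, List.prod_cons, List.prod_nil,
    if_true, if_neg (Bool.false_ne_true), mul_one, gens_last]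
  group

theorem code_computable (n k : ℕ) : Computable (code n k) := by
  have hL : Primrec (fun p : Fin n × Bool =>
      if p.2 then [((⟨(p.1 : ℕ), by omega⟩ : Fin (n + k + 1)), true),
                   ((⟨n + k, by omega⟩ : Fin (n + k + 1)), false)]
      else [((⟨n + k, by omega⟩ : Fin (n + k + 1)), true),
            ((⟨(p.1 : ℕ), by omega⟩ : Fin (n + k + 1)), false)]) :=
    Primrec.dom_finite _
  have hflat : Primrec (fun w : List (Fin n × Bool) => w.flatMap fun p =>
      if p.2 then [((⟨(p.1 : ℕ), by omega⟩ : Fin (n + k + 1)), true),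
                   ((⟨n + k, by omega⟩ : Fin (n + k + 1)), false)]
      else [((⟨n + k, by omega⟩ : Fin (n + k + 1)), true),
            ((⟨(p.1 : ℕ), by omega⟩ : Fin (n + k + 1)), false)]) :=
    Primrec.list_flatMap Primrec.id (hL.comp Primrec.snd).to₂
  have : Primrec (code n k) := by
    unfold code
    exact Primrec.list_append.comp
      (Primrec.list_cons.comp (Primrec.const _) hflat) (Primrec.const _)
  exact this.to_comp

end Stmt11Aux

/-- If `G` is a finitely presented group containing a finitely generated
submonoid with undecidable membership problem, then the free product `G ∗ ℤ` admits a
finite group generating set `A` such that membership in the submonoid generated by `A`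
(the positivity problem for `A`) is undecidable. -/
theorem stmt11 {G : Type*} [Group G]
    (hfp : ∃ (p : ℕ) (rels : Finset (FreeGroup (Fin p))),
      Nonempty (G ≃* PresentedGroup (rels : Set (FreeGroup (Fin p)))))
    {n : ℕ} (X : Fin n → G) (hgen : Subgroup.closure (Set.range X) = ⊤)
    (hund : ∃ (k : ℕ) (S : Fin k → G),
      ¬ ComputablePred fun w : List (Fin n × Bool) =>
          evalWord X w ∈ Submonoid.closure (Set.range S)) :
    ∃ (m : ℕ) (A : Fin m → Coprod G (Multiplicative ℤ)),
      Subgroup.closure (Set.range A) = ⊤ ∧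
      ¬ ComputablePred fun w : List (Fin m × Bool) =>
          evalWord A w ∈ Submonoid.closure (Set.range A) := by
  classical
  obtain ⟨k, S, hS⟩ := hund
  refine ⟨n + k + 1, Stmt11Aux.gens X S, Stmt11Aux.gens_generate X S hgen, ?_⟩
  intro hC
  apply hS
  obtain ⟨fb, hfb, hfQ⟩ := ComputablePred.computable_iff.1 hC
  refine ComputablePred.computable_iff.2
    ⟨fun w => fb (Stmt11Aux.code n k w), hfb.comp (Stmt11Aux.code_computable n k), ?_⟩
  funext w
  have h1 : (evalWord (Stmt11Aux.gens X S) (Stmt11Aux.code n k w) ∈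
      Submonoid.closure (Set.range (Stmt11Aux.gens X S))) =
      (fb (Stmt11Aux.code n k w) : Prop) := congrFun hfQ (Stmt11Aux.code n k w)
  rw [Stmt11Aux.evalWord_code, Stmt11Aux.key] at h1
  exact propext (h1 ▸ Iff.rfl)
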